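/- The following inequality holds: 4·(ψ(17/4) − (9/26)·ψ(17/8) − (17/26)·ψ(25/8)) · ( Γ(1/4)·Γ(17/8)·Γ(9/8) / (Γ(13/4)·Γ(1/8)²) )^4 > ( 4·(ψ(33/8) − (17/50)·ψ(33/16) − (33/50)·ψ(49/16)) + 4·(ψ(9/8) − ψ(17/16)) ) · ( Γ(1/8)·Γ(33/16)·Γ(17/16) / (Γ(25/8)·Γ(1/16)²) )^4. Consequently, in Example 2 of the paper with α = 1, the BDeu posterior expected entropy of G⁻, E(H^{G⁻}(X) | D), strictly exceeds that of G⁺, E(H^{G⁺}(X) | D): BDeu expresses a strict preference between the two DAGs even though the data contribute identical information to both. -/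

import Mathlib

open Real

/-- The digamma function: derivative of `log ∘ Γ`. -/
noncomputable def digamma (x : ℝ) : ℝ := deriv (fun y => Real.log (Real.Gamma y)) x

private lemma logGamma_diffAt {x : ℝ} (hx : 0 < x) :
    DifferentiableAt ℝ (fun y => Real.log (Real.Gamma y)) x := by
  have hg : DifferentiableAt ℝ Real.Gamma x :=
    Real.differentiableAt_Gamma (fun m => by
      have : (0:ℝ) ≤ m := Nat.cast_nonneg m
      intro h; rw [h] at hx; linarith)
  exact (Real.differentiableAt_log (Real.Gamma_pos_of_pos hx).ne').comp x hg

private lemma digamma_hasDeriv {x : ℝ} (hx : 0 < x) :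
    HasDerivAt (fun y => Real.log (Real.Gamma y)) (digamma x) x :=
  (logGamma_diffAt hx).hasDerivAt

/-- Recurrence: `ψ(x+1) = ψ(x) + 1/x` for `x > 0`. -/
lemma digamma_add_one {x : ℝ} (hx : 0 < x) : digamma (x + 1) = digamma x + 1 / x := by
  have heq : (fun y => Real.log (Real.Gamma (y + 1)))
      =ᶠ[nhds x] (fun y => Real.log y + Real.log (Real.Gamma y)) := by
    filter_upwards [eventually_gt_nhds hx] with y hy
    rw [Real.Gamma_add_one hy.ne', Real.log_mul hy.ne' (Real.Gamma_pos_of_pos hy).ne']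
  have h2 : deriv (fun y => Real.log (Real.Gamma (y + 1))) x = digamma (x + 1) := by
    simpa [digamma] using deriv_comp_add_const (fun y => Real.log (Real.Gamma y)) 1 x
  have h3 : deriv (fun y => Real.log y + Real.log (Real.Gamma y)) x = 1 / x + digamma x := by
    rw [deriv_fun_add (Real.differentiableAt_log hx.ne') (logGamma_diffAt hx), Real.deriv_log]
    rw [one_div]
    rfl
  rw [← h2, heq.deriv_eq, h3]; ring

/-- Upper bound: `ψ(x) ≤ log x` for `x > 0`, from convexity of `log Γ`. -/
lemma digamma_le_log {x : ℝ} (hx : 0 < x) : digamma x ≤ Real.log x := by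
  have hs := Real.convexOn_log_Gamma.deriv_le_slope (Set.mem_Ioi.2 hx)
    (Set.mem_Ioi.2 (by linarith : (0:ℝ) < x + 1)) (by linarith)
    (f := Real.log ∘ Real.Gamma) (logGamma_diffAt hx)
  have hslope : slope (Real.log ∘ Real.Gamma) x (x + 1) = Real.log x := by
    rw [slope_def_field]
    simp only [Function.comp_apply]
    rw [Real.Gamma_add_one hx.ne', Real.log_mul hx.ne' (Real.Gamma_pos_of_pos hx).ne']
    field_simp
    ring
  rw [hslope] at hs
  exact hs
  -- note: `deriv (log ∘ Gamma) = digamma` definitionally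

/-- Lower bound: `log (x-1) ≤ ψ(x)` for `x > 1`, from convexity of `log Γ`. -/
lemma log_le_digamma {x : ℝ} (hx : 1 < x) : Real.log (x - 1) ≤ digamma x := by
  have hx0 : (0:ℝ) < x := by linarith
  have hx1 : (0:ℝ) < x - 1 := by linarith
  have hs := Real.convexOn_log_Gamma.slope_le_deriv (Set.mem_Ioi.2 hx1)
    (Set.mem_Ioi.2 hx0) (by linarith)
    (f := Real.log ∘ Real.Gamma) (logGamma_diffAt hx0)
  have hslope : slope (Real.log ∘ Real.Gamma) (x - 1) x = Real.log (x - 1) := by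
    rw [slope_def_field]
    simp only [Function.comp_apply]
    have : Real.Gamma x = (x - 1) * Real.Gamma (x - 1) := by
      have := Real.Gamma_add_one hx1.ne'
      rw [sub_add_cancel] at this
      exact this
    rw [this, Real.log_mul hx1.ne' (Real.Gamma_pos_of_pos hx1).ne']
    field_simp
    ring
  rw [hslope] at hs
  exact hs

set_option maxHeartbeats 1000000 in
theorem bdeu_example2_entropy_prefers_smaller :
    4 * (digamma (17/4) - (9/26) * digamma (17/8) - (17/26) * digamma (25/8)) *
        (Real.Gamma (1/4) * Real.Gamma (17/8) * Real.Gamma (9/8) /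
          (Real.Gamma (13/4) * Real.Gamma (1/8) ^ 2)) ^ 4
      > (4 * (digamma (33/8) - (17/50) * digamma (33/16) - (33/50) * digamma (49/16))
          + 4 * (digamma (9/8) - digamma (17/16))) *
        (Real.Gamma (1/8) * Real.Gamma (33/16) * Real.Gamma (17/16) /
          (Real.Gamma (25/8) * Real.Gamma (1/16) ^ 2)) ^ 4 := by
  -- Gamma recurrences
  have g14 : (0:ℝ) < Real.Gamma (1/4) := Real.Gamma_pos_of_pos (by norm_num)
  have g18 : (0:ℝ) < Real.Gamma (1/8) := Real.Gamma_pos_of_pos (by norm_num)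
  have g116 : (0:ℝ) < Real.Gamma (1/16) := Real.Gamma_pos_of_pos (by norm_num)
  have hG98 : Real.Gamma (9/8) = (1/8) * Real.Gamma (1/8) := by
    rw [show (9:ℝ)/8 = 1/8 + 1 by norm_num, Real.Gamma_add_one (by norm_num)]
  have hG178 : Real.Gamma (17/8) = (9/8) * ((1/8) * Real.Gamma (1/8)) := by
    rw [show (17:ℝ)/8 = 9/8 + 1 by norm_num, Real.Gamma_add_one (by norm_num), hG98]
  have hG54 : Real.Gamma (5/4) = (1/4) * Real.Gamma (1/4) := by
    rw [show (5:ℝ)/4 = 1/4 + 1 by norm_num, Real.Gamma_add_one (by norm_num)]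
  have hG94 : Real.Gamma (9/4) = (5/4) * ((1/4) * Real.Gamma (1/4)) := by
    rw [show (9:ℝ)/4 = 5/4 + 1 by norm_num, Real.Gamma_add_one (by norm_num), hG54]
  have hG134 : Real.Gamma (13/4) = (9/4) * ((5/4) * ((1/4) * Real.Gamma (1/4))) := by
    rw [show (13:ℝ)/4 = 9/4 + 1 by norm_num, Real.Gamma_add_one (by norm_num), hG94]
  have hG1716 : Real.Gamma (17/16) = (1/16) * Real.Gamma (1/16) := by
    rw [show (17:ℝ)/16 = 1/16 + 1 by norm_num, Real.Gamma_add_one (by norm_num)]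
  have hG3316 : Real.Gamma (33/16) = (17/16) * ((1/16) * Real.Gamma (1/16)) := by
    rw [show (33:ℝ)/16 = 17/16 + 1 by norm_num, Real.Gamma_add_one (by norm_num), hG1716]
  have hG258 : Real.Gamma (25/8) = (17/8) * ((9/8) * ((1/8) * Real.Gamma (1/8))) := by
    rw [show (25:ℝ)/8 = 17/8 + 1 by norm_num, Real.Gamma_add_one (by norm_num), hG178]
  have hF1 : Real.Gamma (1/4) * Real.Gamma (17/8) * Real.Gamma (9/8) /
      (Real.Gamma (13/4) * Real.Gamma (1/8) ^ 2) = 1/40 := by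
    rw [hG178, hG98, hG134]
    field_simp
    ring
  have hF2 : Real.Gamma (1/8) * Real.Gamma (33/16) * Real.Gamma (17/16) /
      (Real.Gamma (25/8) * Real.Gamma (1/16) ^ 2) = 1/72 := by
    rw [hG3316, hG1716, hG258]
    field_simp
    ring
  rw [hF1, hF2]
  -- digamma recurrences (chains)
  have c5_4 : digamma (5/4) = digamma (1/4) + 4/1 := by
    rw [show (5:ℝ)/4 = 1/4 + 1 by norm_num, digamma_add_one (by norm_num)]
    norm_num
  have c9_4 : digamma (9/4) = digamma (5/4) + 4/5 := by
    rw [show (9:ℝ)/4 = 5/4 + 1 by norm_num, digamma_add_one (by norm_num)]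
    norm_num
  have c13_4 : digamma (13/4) = digamma (9/4) + 4/9 := by
    rw [show (13:ℝ)/4 = 9/4 + 1 by norm_num, digamma_add_one (by norm_num)]
    norm_num
  have c17_4 : digamma (17/4) = digamma (13/4) + 4/13 := by
    rw [show (17:ℝ)/4 = 13/4 + 1 by norm_num, digamma_add_one (by norm_num)]
    norm_num
  have c21_4 : digamma (21/4) = digamma (17/4) + 4/17 := by
    rw [show (21:ℝ)/4 = 17/4 + 1 by norm_num, digamma_add_one (by norm_num)]
    norm_num
  have c25_4 : digamma (25/4) = digamma (21/4) + 4/21 := by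
    rw [show (25:ℝ)/4 = 21/4 + 1 by norm_num, digamma_add_one (by norm_num)]
    norm_num
  have c9_8 : digamma (9/8) = digamma (1/8) + 8/1 := by
    rw [show (9:ℝ)/8 = 1/8 + 1 by norm_num, digamma_add_one (by norm_num)]
    norm_num
  have c17_8 : digamma (17/8) = digamma (9/8) + 8/9 := by
    rw [show (17:ℝ)/8 = 9/8 + 1 by norm_num, digamma_add_one (by norm_num)]
    norm_num
  have c25_8 : digamma (25/8) = digamma (17/8) + 8/17 := by
    rw [show (25:ℝ)/8 = 17/8 + 1 by norm_num, digamma_add_one (by norm_num)]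
    norm_num
  have c33_8 : digamma (33/8) = digamma (25/8) + 8/25 := by
    rw [show (33:ℝ)/8 = 25/8 + 1 by norm_num, digamma_add_one (by norm_num)]
    norm_num
  have c41_8 : digamma (41/8) = digamma (33/8) + 8/33 := by
    rw [show (41:ℝ)/8 = 33/8 + 1 by norm_num, digamma_add_one (by norm_num)]
    norm_num
  have c49_8 : digamma (49/8) = digamma (41/8) + 8/41 := by
    rw [show (49:ℝ)/8 = 41/8 + 1 by norm_num, digamma_add_one (by norm_num)]
    norm_num
  have c17_16 : digamma (17/16) = digamma (1/16) + 16/1 := by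
    rw [show (17:ℝ)/16 = 1/16 + 1 by norm_num, digamma_add_one (by norm_num)]
    norm_num
  have c33_16 : digamma (33/16) = digamma (17/16) + 16/17 := by
    rw [show (33:ℝ)/16 = 17/16 + 1 by norm_num, digamma_add_one (by norm_num)]
    norm_num
  have c49_16 : digamma (49/16) = digamma (33/16) + 16/33 := by
    rw [show (49:ℝ)/16 = 33/16 + 1 by norm_num, digamma_add_one (by norm_num)]
    norm_num
  have c65_16 : digamma (65/16) = digamma (49/16) + 16/49 := by
    rw [show (65:ℝ)/16 = 49/16 + 1 by norm_num, digamma_add_one (by norm_num)]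
    norm_num
  have c81_16 : digamma (81/16) = digamma (65/16) + 16/65 := by
    rw [show (81:ℝ)/16 = 65/16 + 1 by norm_num, digamma_add_one (by norm_num)]
    norm_num
  have c97_16 : digamma (97/16) = digamma (81/16) + 16/81 := by
    rw [show (97:ℝ)/16 = 81/16 + 1 by norm_num, digamma_add_one (by norm_num)]
    norm_num
  -- bracket bounds
  have hu4 : Real.log (21/4) ≤ digamma (25/4) := by
    have h := log_le_digamma (show (1:ℝ) < 25/4 by norm_num)
    rwa [show (25:ℝ)/4 - 1 = 21/4 by norm_num] at h
  have hu2 : digamma (49/8) ≤ Real.log (49/8) := digamma_le_log (by norm_num)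
  have hu1 : Real.log (81/16) ≤ digamma (97/16) := by
    have h := log_le_digamma (show (1:ℝ) < 97/16 by norm_num)
    rwa [show (97:ℝ)/16 - 1 = 81/16 by norm_num] at h
  -- rational bounds on log differences
  have hl1 : Real.log (21/4) - Real.log (49/8) ≥ -(1/6 : ℝ) := by
    have h76 : Real.log ((49:ℝ)/8 / (21/4)) ≤ (49:ℝ)/8 / (21/4) - 1 :=
      Real.log_le_sub_one_of_pos (by norm_num)
    rw [Real.log_div (by norm_num) (by norm_num)] at h76
    norm_num at h76 ⊢
    linarith
  have hl2 : Real.log (49/8) - Real.log (81/16) ≤ (17/81 : ℝ) := by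
    have h98 : Real.log ((49:ℝ)/8 / (81/16)) ≤ (49:ℝ)/8 / (81/16) - 1 :=
      Real.log_le_sub_one_of_pos (by norm_num)
    rw [Real.log_div (by norm_num) (by norm_num)] at h98
    norm_num at h98 ⊢
    linarith
  -- combine into bounds on the two digamma combinations
  have hA : 4 * (digamma (17/4) - (9/26) * digamma (17/8) - (17/26) * digamma (25/8))
      > (13/10 : ℝ) := by
    linarith [c5_4, c9_4, c13_4, c17_4, c21_4, c25_4, c9_8, c17_8, c25_8, c33_8, c41_8,
      c49_8, hu4, hu2, hl1]
  have hB : 4 * (digamma (33/8) - (17/50) * digamma (33/16) - (33/50) * digamma (49/16))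
      + 4 * (digamma (9/8) - digamma (17/16)) < (399/100 : ℝ) := by
    linarith [c9_8, c17_8, c25_8, c33_8, c41_8, c49_8, c17_16, c33_16, c49_16, c65_16,
      c81_16, c97_16, hu2, hu1, hl2]
  have hp1 : ((1:ℝ)/40)^4 = 1/2560000 := by norm_num
  have hp2 : ((1:ℝ)/72)^4 = 1/26873856 := by norm_num
  rw [hp1, hp2]
  linarith
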